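/- Let M be a Hausdorff, σ-compact, boundaryless smooth manifold modeled on a finite-dimensional real normed space, and let D(M) denote the space of smooth compactly supported functions M → ℂ, an algebra under pointwise multiplication. If L : D(M) → D(M) is a ℂ-linear map satisfying L(f·g) = L(f)·g for all f, g ∈ D(M), then there exists a unique smooth function h : M → ℂ such that L(f) = h·f (pointwise product) for all f ∈ D(M). (This is the paper's Lemma 9.1: the multiplier algebra of D(M) is the algebra E(M) of all smooth functions on M.) -/

import Mathlib

open scoped Manifold

/-- The space `𝒟(M)` of smooth compactly supported complex-valued functions on a manifold `M`,
as a `ℂ`-submodule of `M → ℂ`. -/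
noncomputable def smoothCompactlySupported {E : Type*} [NormedAddCommGroup E] [NormedSpace ℝ E]
    {H : Type*} [TopologicalSpace H] (I : ModelWithCorners ℝ E H)
    (M : Type*) [TopologicalSpace M] [ChartedSpace H M] : Submodule ℂ (M → ℂ) where
  carrier := {f | ContMDiff I 𝓘(ℝ, ℂ) (⊤ : ℕ∞) f ∧ HasCompactSupport f}
  zero_mem' := ⟨contMDiff_const, HasCompactSupport.zero⟩
  add_mem' := fun hf hg => ⟨hf.1.add hg.1, hf.2.add hg.2⟩
  smul_mem' := fun c f hf => by
    refine ⟨?_, hf.2.mono (Function.support_const_smul_subset c f)⟩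
    have h2 : c • f = fun x => c * f x := by funext x; simp [smul_eq_mul]
    rw [h2]
    exact ((ContinuousLinearMap.mul ℝ ℂ c).contMDiff).comp hf.1

/-- Lemma 9.1 of the paper: the multiplier algebra of `𝒟(M)` is `ℰ(M)`. If `M` is a Hausdorff,
σ-compact, boundaryless smooth manifold modeled on a finite-dimensional real normed space and
`L : 𝒟(M) → 𝒟(M)` is a `ℂ`-linear map with `L(f·g) = L(f)·g` for all `f, g ∈ 𝒟(M)`, then there
is a unique smooth function `h : M → ℂ` such that `L(f) = h·f` for all `f ∈ 𝒟(M)`. -/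
theorem leftMultiplier_eq_smooth_mul
    {E : Type*} [NormedAddCommGroup E] [NormedSpace ℝ E] [FiniteDimensional ℝ E]
    (I : ModelWithCorners ℝ E E) [I.Boundaryless]
    (M : Type*) [TopologicalSpace M] [T2Space M] [SigmaCompactSpace M]
    [ChartedSpace E M] [IsManifold I (⊤ : ℕ∞) M]
    (L : smoothCompactlySupported I M →ₗ[ℂ] smoothCompactlySupported I M)
    (hL : ∀ f g fg : smoothCompactlySupported I M,
      (fg : M → ℂ) = (f : M → ℂ) * (g : M → ℂ) →
      ((L fg : M → ℂ)) = (L f : M → ℂ) * (g : M → ℂ)) :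
    ∃! h : M → ℂ, ContMDiff I 𝓘(ℝ, ℂ) (⊤ : ℕ∞) h ∧
      ∀ f : smoothCompactlySupported I M, ((L f : M → ℂ)) = h * (f : M → ℂ) := by
  classical
  have mem_iff : ∀ f : M → ℂ, f ∈ smoothCompactlySupported I M ↔
      ContMDiff I 𝓘(ℝ, ℂ) (⊤ : ℕ∞) f ∧ HasCompactSupport f := fun f => Iff.rfl
  -- bump functions
  have bump : ∀ c : M, ∃ f : smoothCompactlySupported I M, (f : M → ℂ) =ᶠ[nhds c] 1 := by
    intro c
    obtain ⟨b⟩ : Nonempty (SmoothBumpFunction I c) := inferInstance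
    refine ⟨⟨fun y => (b y : ℂ), ?_, ?_⟩, ?_⟩
    · exact Complex.ofRealCLM.contMDiff.comp b.contMDiff
    · exact b.hasCompactSupport.comp_left (g := fun r : ℝ => (r : ℂ)) (by simp)
    · filter_upwards [b.eventuallyEq_one] with y hy
      simp only [hy, Pi.one_apply, Complex.ofReal_one]
  choose φ hφ using bump
  -- product of two elements is in the submodule
  have prodMem : ∀ a b : smoothCompactlySupported I M,
      ((a : M → ℂ) * (b : M → ℂ)) ∈ smoothCompactlySupported I M := by
    intro a b
    have hm : ContMDiff 𝓘(ℝ, ℂ × ℂ) 𝓘(ℝ, ℂ) (⊤ : ℕ∞) (fun p : ℂ × ℂ => p.1 * p.2) :=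
      (contDiff_fst.mul contDiff_snd).contMDiff
    have hp : ContMDiff I 𝓘(ℝ, ℂ × ℂ) (⊤ : ℕ∞) (fun x => ((a : M → ℂ) x, (b : M → ℂ) x)) := by
      exact a.2.1.prodMk_space b.2.1
    exact ⟨hm.comp hp, a.2.2.mul_right⟩
  -- the key swapping identity
  have swap : ∀ a b : smoothCompactlySupported I M,
      (L a : M → ℂ) * (b : M → ℂ) = (L b : M → ℂ) * (a : M → ℂ) := by
    intro a b
    have h1 := hL a b ⟨_, prodMem a b⟩ rfl
    have h2 := hL b a ⟨_, prodMem a b⟩ (mul_comm _ _)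
    exact h1.symm.trans h2
  set h : M → ℂ := fun x => (L (φ x) : M → ℂ) x with hh
  have key : ∀ (f : smoothCompactlySupported I M) (x : M),
      (L f : M → ℂ) x = h x * (f : M → ℂ) x := by
    intro f x
    have hx : (φ x : M → ℂ) x = 1 := (hφ x).self_of_nhds
    have := congrFun (swap f (φ x)) x
    simp only [Pi.mul_apply, hx, mul_one] at this
    rw [this, mul_comm]
  refine ⟨h, ⟨?_, fun f => funext fun x => key f x⟩, ?_⟩
  · intro x
    have heq : h =ᶠ[nhds x] (L (φ x) : M → ℂ) := by
      filter_upwards [hφ x] with y hy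
      have := key (φ x) y
      rw [this, hy, Pi.one_apply, mul_one]
    exact ((L (φ x)).2.1.contMDiffAt).congr_of_eventuallyEq heq
  · rintro h' ⟨-, hpr⟩
    funext x
    have hx : (φ x : M → ℂ) x = 1 := (hφ x).self_of_nhds
    have := congrFun (hpr (φ x)) x
    simp only [Pi.mul_apply, hx, mul_one] at this
    exact this.symm
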